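/- Fix pairwise distinct λ_1,…,λ_k ∈ ℂ with Re(λ_j) ≠ 0 for all j, and h, w ∈ ℂ^k such that 1 + Σ_{j=1}^k w_j/(iω−λ_j) ≠ 0 for every ω ∈ ℝ; set Ĥ(iω) = (Σ_j h_j w_j/(iω−λ_j))/(1 + Σ_j w_j/(iω−λ_j)). Then for every ε > 0 there exist R > 0 and δ > 0 with the following property: for every σ ∈ ℂ^k with |Re(σ_j)| ≥ R for all j and σ_j ≠ λ_l for all j, l, and every ŵ ∈ ℂ^k with |ŵ_j − w_j| ≤ δ for all j, the second-order barycentric form H_SO with support points λ_j, quasi-support points σ_j, values h_j and weights ŵ_j(λ_j−σ_j) satisfies: H_SO(iω) is defined (its denominator 1 + Σ_j ŵ_j(λ_j−σ_j)/((iω−λ_j)(iω−σ_j)) is nonzero) for every ω ∈ ℝ, and sup_{ω∈ℝ} |Ĥ(iω) − H_SO(iω)| ≤ ε. -/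

import Mathlib

open BigOperators Complex

lemma re_sub_aux (ω : ℝ) (z : ℂ) : ((ω : ℂ) * I - z).re = -z.re := by simp

lemma ne_aux (ω : ℝ) (z : ℂ) (hz : z.re ≠ 0) : (ω : ℂ) * I - z ≠ 0 := by
  intro hc
  have h2 := congrArg Complex.re hc
  rw [re_sub_aux] at h2
  simp at h2
  exact hz h2

lemma norm_aux (ω : ℝ) (z : ℂ) : |z.re| ≤ ‖(ω : ℂ) * I - z‖ := by
  have := Complex.abs_re_le_norm ((ω : ℂ) * I - z)
  rw [re_sub_aux, abs_neg] at this
  simpa using this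

lemma exists_pos_lb {k : ℕ} (f : Fin k → ℝ) (hf : ∀ j, 0 < f j) :
    ∃ m : ℝ, 0 < m ∧ ∀ j, m ≤ f j := by
  rcases isEmpty_or_nonempty (Fin k) with hk | hk
  · exact ⟨1, one_pos, fun j => isEmptyElim j⟩
  · obtain ⟨j₀, -, hj₀⟩ := Finset.exists_min_image Finset.univ f
      ⟨Classical.arbitrary _, Finset.mem_univ _⟩
    exact ⟨f j₀, hf j₀, fun j => hj₀ j (Finset.mem_univ j)⟩

lemma frac_bound (N D N' D' : ℂ) (d B C η ε : ℝ) (hd : 0 < d)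
    (hD : d ≤ ‖D‖) (hD' : d / 2 ≤ ‖D'‖) (hB : ‖N‖ ≤ B) (hC : ‖D‖ ≤ C)
    (heN : ‖N' - N‖ ≤ η) (heD : ‖D' - D‖ ≤ η)
    (hη : η * (B + C) * 2 ≤ ε * d ^ 2) :
    ‖N / D - N' / D'‖ ≤ ε := by
  have hD0 : D ≠ 0 := by intro hc; rw [hc] at hD; simp at hD; linarith
  have hD'0 : D' ≠ 0 := by intro hc; rw [hc] at hD'; simp at hD'; linarith
  have hη0 : 0 ≤ η := le_trans (norm_nonneg _) heD
  have hB0 : 0 ≤ B := le_trans (norm_nonneg _) hB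
  have hC0 : 0 ≤ C := le_trans (norm_nonneg _) hC
  have key : N / D - N' / D' = (N * (D' - D) - (N' - N) * D) / (D * D') := by
    field_simp
    ring
  rw [key, norm_div, norm_mul]
  have hnum : ‖N * (D' - D) - (N' - N) * D‖ ≤ B * η + η * C := by
    calc ‖N * (D' - D) - (N' - N) * D‖ ≤ ‖N * (D' - D)‖ + ‖(N' - N) * D‖ := norm_sub_le _ _
    _ = ‖N‖ * ‖D' - D‖ + ‖N' - N‖ * ‖D‖ := by rw [norm_mul, norm_mul]
    _ ≤ B * η + η * C := by gcongr
  have hden : d * (d / 2) ≤ ‖D‖ * ‖D'‖ :=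
    mul_le_mul hD hD' (by linarith) (norm_nonneg _)
  have h1 : ‖N * (D' - D) - (N' - N) * D‖ / (‖D‖ * ‖D'‖)
      ≤ (B * η + η * C) / (d * (d / 2)) := by
    apply div_le_div₀ (by positivity) hnum (by positivity) hden
  refine le_trans h1 ?_
  rw [div_le_iff₀ (by positivity)]
  nlinarith [sq_nonneg d]

lemma denom_lb (k : ℕ) (lam : Fin k → ℂ) (hre : ∀ j, (lam j).re ≠ 0) (w : Fin k → ℂ)
    (hden : ∀ ω : ℝ, 1 + ∑ j, w j / ((ω : ℂ) * I - lam j) ≠ 0) :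
    ∃ d : ℝ, 0 < d ∧ ∀ ω : ℝ, d ≤ ‖1 + ∑ j, w j / ((ω : ℂ) * I - lam j)‖ := by
  set f : ℝ → ℂ := fun ω => 1 + ∑ j, w j / ((ω : ℂ) * I - lam j) with hf
  have hcont : Continuous f := by
    apply continuous_const.add
    apply continuous_finset_sum
    intro j _
    exact continuous_const.div (by fun_prop) (fun x => ne_aux x (lam j) (hre j))
  set W : ℝ := ∑ j, ‖w j‖ with hW
  have hW0 : 0 ≤ W := Finset.sum_nonneg fun j _ => norm_nonneg _
  set M : ℝ := 1 + 2 * W + ∑ j, ‖lam j‖ with hM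
  have hL0 : 0 ≤ ∑ j, ‖lam j‖ := Finset.sum_nonneg fun j _ => norm_nonneg _
  have hM0 : 0 < M := by positivity
  have hfar : ∀ ω : ℝ, M ≤ |ω| → (1:ℝ)/2 ≤ ‖f ω‖ := by
    intro ω hω
    have hterm : ∀ j, ‖w j / ((ω : ℂ) * I - lam j)‖ ≤ ‖w j‖ / (1 + 2 * W) := by
      intro j
      rw [norm_div]
      apply div_le_div_of_nonneg_left (norm_nonneg _) (by positivity)
      have h1 : ‖lam j‖ ≤ ∑ i, ‖lam i‖ :=
        Finset.single_le_sum (fun i _ => norm_nonneg (lam i)) (Finset.mem_univ j)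
      have h2 : ‖(ω : ℂ) * I‖ = |ω| := by
        rw [norm_mul]
        simp
      have h3 : ‖(ω : ℂ) * I‖ - ‖lam j‖ ≤ ‖(ω : ℂ) * I - lam j‖ := norm_sub_norm_le _ _
      rw [h2] at h3
      linarith
    have hS : ‖∑ j, w j / ((ω : ℂ) * I - lam j)‖ ≤ W / (1 + 2 * W) := by
      calc ‖∑ j, w j / ((ω : ℂ) * I - lam j)‖ ≤ ∑ j, ‖w j / ((ω : ℂ) * I - lam j)‖ :=
        norm_sum_le _ _
      _ ≤ ∑ j, ‖w j‖ / (1 + 2 * W) := Finset.sum_le_sum fun j _ => hterm j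
      _ = W / (1 + 2 * W) := by rw [← Finset.sum_div]
    have hS2 : ‖∑ j, w j / ((ω : ℂ) * I - lam j)‖ ≤ 1/2 := by
      refine le_trans hS ?_
      rw [div_le_iff₀ (by positivity)]
      linarith
    have h4 := norm_sub_norm_le (1 : ℂ) (-(∑ j, w j / ((ω : ℂ) * I - lam j)))
    simp only [norm_one, norm_neg, sub_neg_eq_add] at h4
    have heq : f ω = 1 + ∑ j, w j / ((ω : ℂ) * I - lam j) := rfl
    rw [heq]
    linarith
  obtain ⟨x₀, hx₀mem, hx₀⟩ := (isCompact_Icc (a := -M) (b := M)).exists_isMinOn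
    (Set.nonempty_Icc.mpr (by linarith)) (hcont.norm.continuousOn)
  have hx₀pos : 0 < ‖f x₀‖ := norm_pos_iff.mpr (hden x₀)
  refine ⟨min (1/2) ‖f x₀‖, lt_min (by norm_num) hx₀pos, fun ω => ?_⟩
  rcases le_or_gt (|ω|) M with hc | hc
  · have hmem : ω ∈ Set.Icc (-M) M := by
      rw [Set.mem_Icc]
      constructor <;> [linarith [neg_abs_le ω]; linarith [le_abs_self ω]]
    exact le_trans (min_le_right _ _) (hx₀ hmem)
  · exact le_trans (min_le_left _ _) (hfar ω hc.le)

set_option maxHeartbeats 1000000 in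
theorem stmt_8 (k : ℕ) (lam : Fin k → ℂ) (hlam : Function.Injective lam)
    (hre : ∀ j, (lam j).re ≠ 0)
    (h w : Fin k → ℂ)
    (hden : ∀ ω : ℝ, 1 + ∑ j, w j / ((ω : ℂ) * I - lam j) ≠ 0) :
    ∀ ε : ℝ, 0 < ε → ∃ R : ℝ, 0 < R ∧ ∃ δ : ℝ, 0 < δ ∧
      ∀ sig : Fin k → ℂ, (∀ j, R ≤ |(sig j).re|) → (∀ j l, sig j ≠ lam l) →
      ∀ wh : Fin k → ℂ, (∀ j, ‖wh j - w j‖ ≤ δ) →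
        (∀ ω : ℝ,
          1 + ∑ j, (wh j * (lam j - sig j))
              / (((ω : ℂ) * I - lam j) * ((ω : ℂ) * I - sig j)) ≠ 0)
        ∧ (∀ ω : ℝ,
            ‖(∑ j, h j * w j / ((ω : ℂ) * I - lam j))
                / (1 + ∑ j, w j / ((ω : ℂ) * I - lam j))
              - (∑ j, h j * (wh j * (lam j - sig j))
                  / (((ω : ℂ) * I - lam j) * ((ω : ℂ) * I - sig j)))
                / (1 + ∑ j, (wh j * (lam j - sig j))
                  / (((ω : ℂ) * I - lam j) * ((ω : ℂ) * I - sig j)))‖ ≤ ε) := by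
  intro ε hε
  obtain ⟨m, hm, hmle⟩ := exists_pos_lb (fun j => |(lam j).re|) (fun j => abs_pos.mpr (hre j))
  obtain ⟨d, hd, hdle⟩ := denom_lb k lam hre w hden
  set B : ℝ := (∑ j, ‖h j * w j‖) / m with hBdef
  set C : ℝ := 1 + (∑ j, ‖w j‖) / m with hCdef
  set K : ℝ := 1 + ∑ j, (1 + ‖h j‖) * (1 + ‖w j‖) with hKdef
  have hsumK : 0 ≤ ∑ j, (1 + ‖h j‖) * (1 + ‖w j‖) :=
    Finset.sum_nonneg fun j _ => by positivity
  have hK : 0 < K := by rw [hKdef]; linarith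
  have hB0 : 0 ≤ B := div_nonneg (Finset.sum_nonneg fun j _ => norm_nonneg _) hm.le
  have hC1 : 1 ≤ C := by
    have h0 : 0 ≤ (∑ j, ‖w j‖) / m :=
      div_nonneg (Finset.sum_nonneg fun j _ => norm_nonneg _) hm.le
    rw [hCdef]; linarith
  have hBC : 0 < B + C := by linarith
  set η₀ : ℝ := min (d / 2) (ε * d ^ 2 / (2 * (B + C))) with hη₀def
  have hη₀ : 0 < η₀ :=
    lt_min (by linarith) (div_pos (mul_pos hε (pow_pos hd 2)) (by linarith))
  have hηd : η₀ ≤ d / 2 := min_le_left _ _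
  have hηε : η₀ ≤ ε * d ^ 2 / (2 * (B + C)) := min_le_right _ _
  clear_value B C K η₀
  refine ⟨max 1 (2 * K / η₀), lt_of_lt_of_le one_pos (le_max_left _ _),
    min 1 (η₀ * m / (2 * K)),
    lt_min one_pos (div_pos (mul_pos hη₀ hm) (by linarith)), ?_⟩
  intro sig hsig hsigne wh hwh
  set R : ℝ := max 1 (2 * K / η₀) with hRdef
  set δ : ℝ := min 1 (η₀ * m / (2 * K)) with hδdef
  have hR0 : 0 < R := lt_of_lt_of_le one_pos (le_max_left _ _)
  have hδ0 : 0 < δ := lt_min one_pos (div_pos (mul_pos hη₀ hm) (by linarith))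
  have hδ1 : δ ≤ 1 := min_le_left _ _
  have h1 : 2 * K / η₀ ≤ R := le_max_right _ _
  rw [div_le_iff₀ hη₀] at h1
  have h2 : δ ≤ η₀ * m / (2 * K) := min_le_right _ _
  rw [le_div_iff₀ (by linarith : (0:ℝ) < 2 * K)] at h2
  clear_value R δ
  set q : ℝ := δ / m + 1 / R with hqdef
  have hq0 : 0 ≤ q := add_nonneg (div_nonneg hδ0.le hm.le) (div_nonneg zero_le_one hR0.le)
  clear_value q
  have hKq : K * q ≤ η₀ := by
    have h3 : K * (δ / m) ≤ η₀ / 2 := by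
      rw [mul_div_assoc', div_le_iff₀ hm]
      nlinarith
    have h4 : K * (1 / R) ≤ η₀ / 2 := by
      rw [mul_one_div, div_le_iff₀ hR0]
      nlinarith
    rw [hqdef, mul_add]
    linarith
  have hsigre : ∀ j, (sig j).re ≠ 0 := by
    intro j hc
    have h1 := hsig j
    rw [hc] at h1
    simp at h1
    linarith
  have hml : ∀ (ω : ℝ) (j : Fin k), m ≤ ‖(ω:ℂ) * I - lam j‖ :=
    fun ω j => le_trans (hmle j) (norm_aux ω (lam j))
  have hRs : ∀ (ω : ℝ) (j : Fin k), R ≤ ‖(ω:ℂ) * I - sig j‖ :=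
    fun ω j => le_trans (hsig j) (norm_aux ω (sig j))
  have hxl : ∀ (ω : ℝ) (j : Fin k), (ω:ℂ) * I - lam j ≠ 0 :=
    fun ω j => ne_aux ω _ (hre j)
  have hxs : ∀ (ω : ℝ) (j : Fin k), (ω:ℂ) * I - sig j ≠ 0 :=
    fun ω j => ne_aux ω _ (hsigre j)
  have hwhb : ∀ j, ‖wh j‖ ≤ ‖w j‖ + 1 := by
    intro j
    calc ‖wh j‖ = ‖w j + (wh j - w j)‖ := by congr 1; ring
    _ ≤ ‖w j‖ + ‖wh j - w j‖ := norm_add_le _ _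
    _ ≤ ‖w j‖ + 1 := by have := hwh j; linarith
  -- per-term difference bound
  have htd : ∀ (ω : ℝ) (j : Fin k),
      ‖wh j * (lam j - sig j) / (((ω:ℂ) * I - lam j) * ((ω:ℂ) * I - sig j))
        - w j / ((ω:ℂ) * I - lam j)‖ ≤ (1 + ‖w j‖) * q := by
    intro ω j
    have hxl' := hxl ω j
    have hxs' := hxs ω j
    have hid : wh j * (lam j - sig j) / (((ω:ℂ) * I - lam j) * ((ω:ℂ) * I - sig j))
        - w j / ((ω:ℂ) * I - lam j)
        = (wh j - w j) / ((ω:ℂ) * I - lam j) - wh j / ((ω:ℂ) * I - sig j) := by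
      field_simp
      ring
    rw [hid]
    have h1 : ‖(wh j - w j) / ((ω:ℂ) * I - lam j)‖ ≤ δ / m := by
      rw [norm_div]
      exact div_le_div₀ hδ0.le (hwh j) hm (hml ω j)
    have h2 : ‖wh j / ((ω:ℂ) * I - sig j)‖ ≤ (‖w j‖ + 1) / R := by
      rw [norm_div]
      exact div_le_div₀ (by positivity) (hwhb j) hR0 (hRs ω j)
    calc ‖(wh j - w j) / ((ω:ℂ) * I - lam j) - wh j / ((ω:ℂ) * I - sig j)‖
        ≤ ‖(wh j - w j) / ((ω:ℂ) * I - lam j)‖ + ‖wh j / ((ω:ℂ) * I - sig j)‖ :=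
      norm_sub_le _ _
    _ ≤ δ / m + (‖w j‖ + 1) / R := add_le_add h1 h2
    _ ≤ (1 + ‖w j‖) * q := by
      rw [hqdef]
      have hh1 : 0 ≤ ‖w j‖ * (δ / m) :=
        mul_nonneg (norm_nonneg _) (div_nonneg hδ0.le hm.le)
      have hh2 : (1 + ‖w j‖) * (δ / m + 1 / R)
          = δ / m + (‖w j‖ + 1) / R + ‖w j‖ * (δ / m) := by
        field_simp
        ring
      rw [hh2]
      linarith
  -- denominator perturbation
  have heD : ∀ ω : ℝ,
      ‖(1 + ∑ j, wh j * (lam j - sig j) / (((ω:ℂ)*I - lam j)*((ω:ℂ)*I - sig j)))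
        - (1 + ∑ j, w j / ((ω:ℂ)*I - lam j))‖ ≤ η₀ := by
    intro ω
    have e : (1 + ∑ j, wh j * (lam j - sig j) / (((ω:ℂ)*I - lam j)*((ω:ℂ)*I - sig j)))
        - (1 + ∑ j, w j / ((ω:ℂ)*I - lam j))
        = ∑ j, (wh j * (lam j - sig j) / (((ω:ℂ)*I - lam j)*((ω:ℂ)*I - sig j))
            - w j / ((ω:ℂ)*I - lam j)) := by
      rw [Finset.sum_sub_distrib]
      ring
    rw [e]
    calc ‖∑ j, (wh j * (lam j - sig j) / (((ω:ℂ)*I - lam j)*((ω:ℂ)*I - sig j))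
            - w j / ((ω:ℂ)*I - lam j))‖
        ≤ ∑ j, ‖wh j * (lam j - sig j) / (((ω:ℂ)*I - lam j)*((ω:ℂ)*I - sig j))
            - w j / ((ω:ℂ)*I - lam j)‖ := norm_sum_le _ _
    _ ≤ ∑ j, (1 + ‖h j‖) * (1 + ‖w j‖) * q := by
        apply Finset.sum_le_sum
        intro j _
        refine le_trans (htd ω j) ?_
        have hh : 0 ≤ ‖h j‖ * ((1 + ‖w j‖) * q) :=
          mul_nonneg (norm_nonneg _) (mul_nonneg (by positivity) hq0)
        nlinarith
    _ = (∑ j, (1 + ‖h j‖) * (1 + ‖w j‖)) * q := by rw [Finset.sum_mul]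
    _ ≤ K * q := by
        apply mul_le_mul_of_nonneg_right _ hq0
        rw [hKdef]; linarith
    _ ≤ η₀ := hKq
  -- numerator perturbation
  have heN : ∀ ω : ℝ,
      ‖(∑ j, h j * (wh j * (lam j - sig j)) / (((ω:ℂ)*I - lam j)*((ω:ℂ)*I - sig j)))
        - ∑ j, h j * w j / ((ω:ℂ)*I - lam j)‖ ≤ η₀ := by
    intro ω
    rw [← Finset.sum_sub_distrib]
    calc ‖∑ j, (h j * (wh j * (lam j - sig j)) / (((ω:ℂ)*I - lam j)*((ω:ℂ)*I - sig j))
            - h j * w j / ((ω:ℂ)*I - lam j))‖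
        ≤ ∑ j, ‖h j * (wh j * (lam j - sig j)) / (((ω:ℂ)*I - lam j)*((ω:ℂ)*I - sig j))
            - h j * w j / ((ω:ℂ)*I - lam j)‖ := norm_sum_le _ _
    _ ≤ ∑ j, (1 + ‖h j‖) * (1 + ‖w j‖) * q := by
        apply Finset.sum_le_sum
        intro j _
        have e : h j * (wh j * (lam j - sig j)) / (((ω:ℂ)*I - lam j)*((ω:ℂ)*I - sig j))
            - h j * w j / ((ω:ℂ)*I - lam j)
            = h j * (wh j * (lam j - sig j) / (((ω:ℂ)*I - lam j)*((ω:ℂ)*I - sig j))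
                - w j / ((ω:ℂ)*I - lam j)) := by
          ring
        rw [e, norm_mul]
        have hh : 0 ≤ (1 + ‖w j‖) * q := mul_nonneg (by positivity) hq0
        calc ‖h j‖ * ‖wh j * (lam j - sig j) / (((ω:ℂ)*I - lam j)*((ω:ℂ)*I - sig j))
              - w j / ((ω:ℂ)*I - lam j)‖
            ≤ ‖h j‖ * ((1 + ‖w j‖) * q) :=
          mul_le_mul_of_nonneg_left (htd ω j) (norm_nonneg (h j))
        _ ≤ (1 + ‖h j‖) * ((1 + ‖w j‖) * q) :=
          mul_le_mul_of_nonneg_right (by linarith [norm_nonneg (h j)]) hh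
        _ = (1 + ‖h j‖) * (1 + ‖w j‖) * q := by ring
    _ = (∑ j, (1 + ‖h j‖) * (1 + ‖w j‖)) * q := by rw [Finset.sum_mul]
    _ ≤ K * q := by
        apply mul_le_mul_of_nonneg_right _ hq0
        rw [hKdef]; linarith
    _ ≤ η₀ := hKq
  -- lower bound on new denominator
  have hD'lb : ∀ ω : ℝ,
      d / 2 ≤ ‖1 + ∑ j, wh j * (lam j - sig j)
        / (((ω:ℂ)*I - lam j)*((ω:ℂ)*I - sig j))‖ := by
    intro ω
    have h1 := hdle ω
    have h2 := heD ω
    have h3 := norm_sub_norm_le (1 + ∑ j, w j / ((ω:ℂ)*I - lam j))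
      (1 + ∑ j, wh j * (lam j - sig j) / (((ω:ℂ)*I - lam j)*((ω:ℂ)*I - sig j)))
    rw [norm_sub_rev] at h3
    linarith
  -- bounds on unperturbed numerator / denominator
  have hNB : ∀ ω : ℝ, ‖∑ j, h j * w j / ((ω:ℂ)*I - lam j)‖ ≤ B := by
    intro ω
    calc ‖∑ j, h j * w j / ((ω:ℂ)*I - lam j)‖
        ≤ ∑ j, ‖h j * w j / ((ω:ℂ)*I - lam j)‖ := norm_sum_le _ _
    _ ≤ ∑ j, ‖h j * w j‖ / m := by
        apply Finset.sum_le_sum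
        intro j _
        rw [norm_div]
        exact div_le_div₀ (norm_nonneg _) le_rfl hm (hml ω j)
    _ = B := by rw [hBdef, Finset.sum_div]
  have hDB : ∀ ω : ℝ, ‖1 + ∑ j, w j / ((ω:ℂ)*I - lam j)‖ ≤ C := by
    intro ω
    have h1 : ‖∑ j, w j / ((ω:ℂ)*I - lam j)‖ ≤ (∑ j, ‖w j‖) / m := by
      calc ‖∑ j, w j / ((ω:ℂ)*I - lam j)‖ ≤ ∑ j, ‖w j / ((ω:ℂ)*I - lam j)‖ :=
        norm_sum_le _ _
      _ ≤ ∑ j, ‖w j‖ / m := by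
          apply Finset.sum_le_sum
          intro j _
          rw [norm_div]
          exact div_le_div₀ (norm_nonneg _) le_rfl hm (hml ω j)
      _ = (∑ j, ‖w j‖) / m := by rw [Finset.sum_div]
    calc ‖1 + ∑ j, w j / ((ω:ℂ)*I - lam j)‖
        ≤ ‖(1:ℂ)‖ + ‖∑ j, w j / ((ω:ℂ)*I - lam j)‖ := norm_add_le _ _
    _ ≤ C := by rw [norm_one, hCdef]; linarith
  have hfin : η₀ * (B + C) * 2 ≤ ε * d ^ 2 := by
    rw [le_div_iff₀ (by linarith : (0:ℝ) < 2 * (B + C))] at hηε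
    nlinarith
  refine ⟨fun ω => ?_, fun ω => ?_⟩
  · intro hc
    have h1 := hD'lb ω
    rw [hc] at h1
    simp at h1
    linarith
  · exact frac_bound _ _ _ _ d B C η₀ ε hd (hdle ω) (hD'lb ω) (hNB ω) (hDB ω)
      (heN ω) (heD ω) hfin
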